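/- Let S be a numerical symmetric semigroup (a symmetric good semigroup with |I| = 1) with maximal ideal M_S = S ∖ {0}. If M_S − M_S is symmetric, then S = {2a + (n+1)b : a, b ∈ ℕ} for some even n ∈ ℕ. -/

import Mathlib

/-! Combinatorics of good semigroups in `ℤ^I` (value semigroups of curve
singularities), following Korell–Schulze–Tozzo. -/

section GoodSemigroups

variable {I : Type*} [Fintype I] [Nonempty I]

/-- Property (E0): `E` contains a translate of `ℕ^I`, i.e. an upper cone. -/
def propE0 (E : Set (I → ℤ)) : Prop :=
  ∃ α : I → ℤ, ∀ β : I → ℤ, α ≤ β → β ∈ E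

/-- Property (E1): closure under componentwise minima. -/
def propE1 (E : Set (I → ℤ)) : Prop :=
  ∀ α ∈ E, ∀ β ∈ E, (fun i => min (α i) (β i)) ∈ E

/-- Property (E2). -/
def propE2 (E : Set (I → ℤ)) : Prop :=
  ∀ α ∈ E, ∀ β ∈ E, ∀ j : I, α j = β j →
    ∃ ε ∈ E, α j < ε j ∧
      ∀ i : I, min (α i) (β i) ≤ ε i ∧ (α i ≠ β i → ε i = min (α i) (β i))

/-- A good semigroup: a submonoid of `ℤ^I` whose unique minimal element is `0`
(equivalently all elements are `≥ 0`) satisfying (E0), (E1) and (E2). -/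
def IsGoodSemigroup (S : Set (I → ℤ)) : Prop :=
  (0 : I → ℤ) ∈ S ∧ (∀ α ∈ S, ∀ β ∈ S, α + β ∈ S) ∧ (∀ α ∈ S, 0 ≤ α) ∧
    propE0 S ∧ propE1 S ∧ propE2 S

/-- The difference `E − F = {α : α + F ⊆ E}`. -/
def sgDiff (E F : Set (I → ℤ)) : Set (I → ℤ) :=
  {α | ∀ β ∈ F, α + β ∈ E}

/-- A semigroup ideal of a good semigroup `S`. -/
def IsSgIdeal (S E : Set (I → ℤ)) : Prop :=
  E.Nonempty ∧ (∀ α ∈ E, ∀ β ∈ S, α + β ∈ E) ∧ ∃ α ∈ S, ∀ β ∈ E, α + β ∈ S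

/-- A good semigroup ideal of `S`: a semigroup ideal satisfying (E1) and (E2). -/
def IsGoodIdeal (S E : Set (I → ℤ)) : Prop :=
  IsSgIdeal S E ∧ propE1 E ∧ propE2 E

/-- The (componentwise) minimal element `μ_E` of a good semigroup ideal. -/
noncomputable def sgMu (E : Set (I → ℤ)) : I → ℤ :=
  fun i => sInf {n : ℤ | ∃ α ∈ E, α i = n}

/-- The conductor ideal `C_E = E − ℕ^I`. -/
def sgCond (E : Set (I → ℤ)) : Set (I → ℤ) :=
  sgDiff E {β | 0 ≤ β}

/-- The conductor `γ_E = μ_{C_E} = inf {α : α + ℕ^I ⊆ E}`. -/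
noncomputable def sgGamma (E : Set (I → ℤ)) : I → ℤ :=
  sgMu (sgCond E)

/-- `τ_E = γ_E − 1`. -/
noncomputable def sgTau (E : Set (I → ℤ)) : I → ℤ :=
  sgGamma E - 1

/-- `Δ(α) = ⋃ i Δ_i(α)` where `Δ_i(α) = {β : β i = α i, β j > α j (j ≠ i)}`. -/
def sgDelta (α : I → ℤ) : Set (I → ℤ) :=
  ⋃ i : I, {β | β i = α i ∧ ∀ j : I, j ≠ i → α j < β j}

/-- The closed version `Δ̄(α)`. -/
def sgDeltaBar (α : I → ℤ) : Set (I → ℤ) :=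
  ⋃ i : I, {β | β i = α i ∧ ∀ j : I, j ≠ i → α j ≤ β j}

/-- A canonical ideal of `S`: a good semigroup ideal `K` such that any good
semigroup ideal `E` with `γ_E = γ_K` containing `K` equals `K`. -/
def IsCanonicalIdeal (S K : Set (I → ℤ)) : Prop :=
  IsGoodIdeal S K ∧
    ∀ E : Set (I → ℤ), IsGoodIdeal S E → sgGamma E = sgGamma K → K ⊆ E → E = K

/-- The normalized canonical ideal `K_S^0`. -/
noncomputable def sgK0 (S : Set (I → ℤ)) : Set (I → ℤ) :=
  {α | sgDelta (sgTau S - α) ∩ S = ∅}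

/-- A good semigroup is symmetric if it is a canonical ideal of itself. -/
def IsSymmetricSg (S : Set (I → ℤ)) : Prop :=
  IsGoodSemigroup S ∧ IsCanonicalIdeal S S

/-- A good semigroup is local if `0` is its only element with a zero coordinate. -/
def IsLocalSg (S : Set (I → ℤ)) : Prop :=
  ∀ α ∈ S, (∃ i : I, α i = 0) → α = 0

/-- A good semigroup ideal `E` is stable if `μ_E + (E − E) = E`. -/
noncomputable def IsStableSgIdeal (E : Set (I → ℤ)) : Prop :=
  (fun β => sgMu E + β) '' sgDiff E E = E

end GoodSemigroups


section AuxLemmas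

variable {I : Type*} [Fintype I] [Nonempty I]

private lemma const_eq (hI : Subsingleton I) (α : I → ℤ) (i₀ : I) :
    α = fun _ => α i₀ :=
  funext fun i => by rw [Subsingleton.elim i i₀]

private lemma gamma_eq (hI : Subsingleton I) (Y : Set (I → ℤ)) (i : I) :
    sgGamma Y i = sInf {n : ℤ | ∀ m : ℤ, n ≤ m → (fun _ => m) ∈ Y} := by
  unfold sgGamma sgMu sgCond sgDiff
  congr 1
  ext n
  simp only [Set.mem_setOf_eq]
  constructor
  · rintro ⟨α, hα, rfl⟩
    intro m hm
    have h1 : α + (fun _ => m - α i) = fun _ : I => m := by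
      funext j
      have hj : α j = α i := by rw [Subsingleton.elim j i]
      show α j + (m - α i) = m
      omega
    have h2 : (fun _ : I => m - α i) ∈ {β : I → ℤ | 0 ≤ β} := by
      intro j
      show (0 : ℤ) ≤ m - α i
      omega
    have := hα _ h2
    rwa [h1] at this
  · intro h
    refine ⟨fun _ => n, ?_, rfl⟩
    intro β hβ
    have hβi : (0:ℤ) ≤ β i := hβ i
    have h1 : (fun _ : I => n) + β = fun _ : I => n + β i := by
      funext j
      have hj : β j = β i := by rw [Subsingleton.elim j i]
      show n + β j = n + β i
      omega
    rw [h1]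
    exact h _ (by omega)

private lemma symm_classical (hI : Subsingleton I) (i₀ : I)
    (X : Set (I → ℤ)) (hX : IsSymmetricSg X) :
    ∃ γ : ℤ, (∀ m : ℤ, γ ≤ m → (fun _ => m) ∈ X) ∧
      (∀ x : ℤ, (fun _ => x) ∈ X ↔ (fun _ => γ - 1 - x) ∉ X) := by
  obtain ⟨h0, hadd, hpos, hE0, _, _⟩ := hX.1
  have hcan := hX.2.2
  have hpos' : ∀ x : ℤ, (fun _ : I => x) ∈ X → 0 ≤ x := fun x hx => hpos _ hx i₀
  have h0' : (fun _ : I => (0:ℤ)) ∈ X := h0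
  have hadd' : ∀ a b : ℤ, (fun _ : I => a) ∈ X → (fun _ : I => b) ∈ X →
      (fun _ : I => a + b) ∈ X := by
    intro a b ha hb
    exact hadd _ ha _ hb
  set C : Set ℤ := {n : ℤ | ∀ m : ℤ, n ≤ m → (fun _ : I => m) ∈ X} with hC
  have hCne : C.Nonempty := by
    obtain ⟨α, hα⟩ := hE0
    refine ⟨α i₀, fun m hm => ?_⟩
    refine hα _ fun j => ?_
    have : α j = α i₀ := by rw [Subsingleton.elim j i₀]
    show α j ≤ m
    omega
  have hCbdd : BddBelow C := ⟨0, fun n hn => hpos' n (hn n le_rfl)⟩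
  set γ := sInf C with hγ
  have hγC : γ ∈ C := Int.csInf_mem hCne hCbdd
  have hγ1 : ∀ m : ℤ, γ ≤ m → (fun _ : I => m) ∈ X := hγC
  have hγ2 : (fun _ : I => γ - 1) ∉ X := by
    intro hmem
    have hmemC : γ - 1 ∈ C := by
      intro m hm
      rcases eq_or_lt_of_le hm with h | h
      · rwa [← h]
      · exact hγ1 m (by omega)
    have := csInf_le hCbdd hmemC
    omega
  set K : Set (I → ℤ) := {α | (fun _ : I => γ - 1 - α i₀) ∉ X} with hK
  have memK : ∀ α : I → ℤ, α ∈ K ↔ (fun _ : I => γ - 1 - α i₀) ∉ X := by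
    intro α; rw [hK]; exact Iff.rfl
  have memKc : ∀ x : ℤ, (fun _ : I => x) ∈ K ↔ (fun _ : I => γ - 1 - x) ∉ X := by
    intro x; exact memK _
  have hKne : (fun _ : I => γ) ∈ K := by
    rw [memKc]
    intro h
    have := hpos' _ h
    omega
  have hKid : ∀ α ∈ K, ∀ β ∈ X, α + β ∈ K := by
    intro α hα β hβ
    rw [memK] at hα ⊢
    intro hmem
    apply hα
    have hb : (fun _ : I => β i₀) ∈ X := by
      rw [← const_eq hI β i₀]; exact hβ
    have hsum := hadd' _ _ hmem hb
    have he : γ - 1 - (α + β) i₀ + β i₀ = γ - 1 - α i₀ := by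
      have : (α + β) i₀ = α i₀ + β i₀ := rfl
      omega
    rwa [he] at hsum
  have hKbd : ∃ α ∈ X, ∀ β ∈ K, α + β ∈ X := by
    refine ⟨fun _ => γ, hγ1 γ le_rfl, ?_⟩
    intro β hβ
    rw [memK] at hβ
    have hb0 : 0 ≤ β i₀ := by
      by_contra h
      exact hβ (hγ1 _ (by omega))
    have he : ((fun _ : I => γ) + β) = fun _ : I => γ + β i₀ := by
      funext j
      have : β j = β i₀ := by rw [Subsingleton.elim j i₀]
      show γ + β j = γ + β i₀
      omega
    rw [he]
    exact hγ1 _ (by omega)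
  have hKE1 : propE1 K := by
    intro α hα β hβ
    rcases le_total (α i₀) (β i₀) with h | h
    · have he : (fun i => min (α i) (β i)) = α := by
        funext i
        rw [Subsingleton.elim i i₀]
        exact min_eq_left h
      rw [he]; exact hα
    · have he : (fun i => min (α i) (β i)) = β := by
        funext i
        rw [Subsingleton.elim i i₀]
        exact min_eq_right h
      rw [he]; exact hβ
  have hKE2 : propE2 K := by
    intro α hα β hβ j hj
    have hab : α = β := by
      funext i
      rw [Subsingleton.elim i j]
      exact hj
    subst hab
    refine ⟨fun _ => max (α j + 1) γ, ?_, ?_, ?_⟩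
    · rw [memKc]
      intro h
      have h1 := hpos' _ h
      have h2 := le_max_right (α j + 1) γ
      omega
    · show α j < max (α j + 1) γ
      have := le_max_left (α j + 1) γ
      omega
    · intro i
      refine ⟨?_, fun h => absurd rfl h⟩
      show min (α i) (α i) ≤ max (α j + 1) γ
      rw [min_self]
      have h1 : α i = α j := by rw [Subsingleton.elim i j]
      have h2 := le_max_left (α j + 1) γ
      omega
  have hXK : X ⊆ K := by
    intro α hα
    rw [memK]
    intro hm
    have ha : (fun _ : I => α i₀) ∈ X := by
      rw [← const_eq hI α i₀]; exact hα
    have hsum := hadd' _ _ hm ha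
    have he : γ - 1 - α i₀ + α i₀ = γ - 1 := by omega
    rw [he] at hsum
    exact hγ2 hsum
  have hγX : sgGamma X = fun _ : I => γ := by
    funext i
    rw [gamma_eq hI X i, ← hC]
  have hγK : sgGamma K = sgGamma X := by
    rw [hγX]
    funext i
    rw [gamma_eq hI K i]
    have hsetK : {n : ℤ | ∀ m : ℤ, n ≤ m → (fun _ : I => m) ∈ K} = Set.Ici γ := by
      ext n
      simp only [Set.mem_setOf_eq, Set.mem_Ici]
      constructor
      · intro h
        by_contra hn
        push_neg at hn
        have h2 := h (γ - 1) (by omega)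
        rw [memKc] at h2
        apply h2
        have he : (fun _ : I => γ - 1 - (γ - 1)) = fun _ : I => (0:ℤ) := by
          funext j; omega
        rw [he]
        exact h0'
      · intro hn m hm
        rw [memKc]
        intro hmem
        have := hpos' _ hmem
        omega
    rw [hsetK, csInf_Ici]
  have hKX : K = X := hcan K ⟨⟨⟨_, hKne⟩, hKid, hKbd⟩, hKE1, hKE2⟩ hγK hXK
  refine ⟨γ, hγ1, fun x => ?_⟩
  constructor
  · intro hx
    have := hXK hx
    rwa [memKc] at this
  · intro hx
    have : (fun _ : I => x) ∈ K := (memKc x).mpr hx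
    rw [hKX] at this
    exact this

private lemma zmain (S' T' : Set ℤ) (h0 : (0:ℤ) ∈ S')
    (hadd : ∀ a ∈ S', ∀ b ∈ S', a + b ∈ S')
    (hpos : ∀ a ∈ S', 0 ≤ a)
    (γS γT : ℤ)
    (hcS : ∀ m : ℤ, γS ≤ m → m ∈ S')
    (hsymS : ∀ x : ℤ, x ∈ S' ↔ γS - 1 - x ∉ S')
    (hsymT : ∀ x : ℤ, x ∈ T' ↔ γT - 1 - x ∉ T')
    (hT : ∀ x : ℤ, x ∈ T' ↔ ∀ m ∈ S', m ≠ 0 → x + m ∈ S' ∧ x + m ≠ 0) :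
    ∃ n : ℕ, Even n ∧ S' = {x : ℤ | ∃ a b : ℕ, x = 2 * a + ((n:ℤ) + 1) * b} := by
  classical
  set F := γS - 1 with hF
  have hFnot : F ∉ S' := by
    intro h
    apply (hsymS F).mp h
    rw [show γS - 1 - F = 0 from by omega]
    exact h0
  by_cases h1 : (1:ℤ) ∈ S'
  · have hall : ∀ x : ℤ, 0 ≤ x → x ∈ S' :=
      fun x hx => Int.le_induction h0 (fun n _ ih => hadd n ih 1 h1) x hx
    refine ⟨0, Even.zero, ?_⟩
    ext x
    simp only [Set.mem_setOf_eq]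
    constructor
    · intro hx
      refine ⟨0, x.toNat, ?_⟩
      have h2 := hpos x hx
      push_cast
      omega
    · rintro ⟨a, b, rfl⟩
      apply hall
      push_cast
      omega
  · have hF1 : 1 ≤ F := by
      have h2 : γS - 1 - 1 ∈ S' := by
        by_contra hc
        exact h1 ((hsymS 1).mpr hc)
      have := hpos _ h2
      omega
    set P : Set ℤ := {x : ℤ | 0 < x ∧ x ∈ S'} with hP
    have hPne : P.Nonempty := ⟨γS, by constructor <;> [omega; exact hcS γS le_rfl]⟩
    have hPbdd : BddBelow P := ⟨0, fun y hy => le_of_lt hy.1⟩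
    set e := sInf P with he
    have heP : e ∈ P := Int.csInf_mem hPne hPbdd
    have hemin : ∀ y : ℤ, 0 < y → y ∈ S' → e ≤ y := fun y hy1 hy2 => csInf_le hPbdd ⟨hy1, hy2⟩
    have hepos : 0 < e := heP.1
    have heS : e ∈ S' := heP.2
    have he2 : 2 ≤ e := by
      by_contra hc
      have : e = 1 := by omega
      rw [this] at heS
      exact h1 heS
    have hTeq : ∀ x : ℤ, x ∈ T' ↔ (x ∈ S' ∨ x = F) := by
      intro x
      rw [hT x]
      constructor
      · intro h
        by_cases hx : x ∈ S'
        · exact Or.inl hx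
        · right
          have hFx : γS - 1 - x ∈ S' := by
            by_contra hc; exact hx ((hsymS x).mpr hc)
          by_contra hne
          have hFx0 : γS - 1 - x ≠ 0 := by omega
          have h2 := h _ hFx hFx0
          rw [show x + (γS - 1 - x) = F from by omega] at h2
          exact hFnot h2.1
      · rintro (hx | rfl)
        · intro m hm hm0
          refine ⟨hadd x hx m hm, ?_⟩
          have h2 := hpos x hx
          have h3 := hpos m hm
          omega
        · intro m hm hm0
          have hmp := hpos m hm
          constructor
          · apply (hsymS (F + m)).mpr
            intro hc
            have := hpos _ hc
            omega
          · omega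
    have h0T : (0:ℤ) ∈ T' := (hTeq 0).mpr (Or.inl h0)
    set FT := γT - 1 with hFT0
    have hFTnot : FT ∉ T' := by
      intro h
      apply (hsymT FT).mp h
      rw [show γT - 1 - FT = 0 from by omega]
      exact h0T
    have hFeNot : F - e ∉ T' := by
      rw [hTeq]
      push_neg
      refine ⟨?_, by omega⟩
      intro hc
      apply (hsymS e).mp heS
      rwa [show γS - 1 - e = F - e from by omega]
    have hup : ∀ y : ℤ, F - e < y → y ∈ T' := by
      intro y hy
      rw [hTeq]
      by_cases hyF : y = F
      · exact Or.inr hyF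
      · left
        by_cases hyb : F < y
        · exact hcS y (by omega)
        · apply (hsymS y).mpr
          intro hc
          have h1' : (0:ℤ) < γS - 1 - y := by omega
          have := hemin _ h1' hc
          omega
    have hFTeq : FT = F - e := by
      have hle : FT ≤ F - e := by
        by_contra hc
        exact hFTnot (hup FT (by omega))
      have hge : F - e ≤ FT := by
        have hm : γT - 1 - (F - e) ∈ T' := by
          by_contra hc
          exact hFeNot ((hsymT (F - e)).mpr hc)
        rw [hTeq] at hm
        rcases hm with h | h
        · have := hpos _ h; omega
        · omega
      omega
    have hstep : ∀ x : ℤ, x ≠ F → x ≠ -e → (x ∈ S' ↔ x + e ∈ S') := by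
      intro x hxF hxe
      have hl : x ∈ T' ↔ x ∈ S' := by
        rw [hTeq]
        exact ⟨fun h => h.resolve_right hxF, Or.inl⟩
      have hγTx : γT - 1 - x = F - e - x := by omega
      have hne : F - e - x ≠ F := by omega
      have hs2 := hsymS (x + e)
      rw [show γS - 1 - (x + e) = F - e - x from by omega] at hs2
      constructor
      · intro hx
        have hxT : x ∈ T' := hl.mpr hx
        have h2 := (hsymT x).mp hxT
        rw [hγTx] at h2
        have hns : F - e - x ∉ S' := fun hc => h2 ((hTeq _).mpr (Or.inl hc))
        exact hs2.mpr hns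
      · intro hx
        have hns : F - e - x ∉ S' := hs2.mp hx
        have hnT : F - e - x ∉ T' := by
          rw [hTeq]; push_neg; exact ⟨hns, hne⟩
        have hxT : x ∈ T' := by
          apply (hsymT x).mpr
          rwa [hγTx]
        exact hl.mp hxT
    have hchain : ∀ x : ℤ, 0 < x → x ∉ S' → ∃ k : ℕ, x + (k:ℤ) * e = F := by
      intro x hx hxn
      have hxlt : x < γS := by
        by_contra hc
        exact hxn (hcS x (by omega))
      have hex : ∃ k : ℕ, x + (k:ℤ) * e ∈ S' := by
        refine ⟨(γS - x).toNat, hcS _ ?_⟩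
        have ht : ((γS - x).toNat : ℤ) = γS - x := Int.toNat_of_nonneg (by omega)
        rw [ht]
        nlinarith [mul_nonneg (by omega : (0:ℤ) ≤ γS - x) (by omega : (0:ℤ) ≤ e - 1)]
      set k₀ := Nat.find hex with hk₀
      have hspec : x + (k₀:ℤ) * e ∈ S' := Nat.find_spec hex
      have hk0pos : k₀ ≠ 0 := by
        intro h
        rw [h] at hspec
        norm_num at hspec
        exact hxn hspec
      have hymem : x + ((k₀ - 1 : ℕ):ℤ) * e ∉ S' := Nat.find_min hex (by omega)
      set y := x + ((k₀ - 1 : ℕ):ℤ) * e with hy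
      have hcast : ((k₀ - 1 : ℕ):ℤ) = (k₀:ℤ) - 1 := by omega
      have hyE : y + e = x + (k₀:ℤ) * e := by rw [hy, hcast]; ring
      have hynn : (0:ℤ) ≤ ((k₀ - 1 : ℕ):ℤ) * e := by positivity
      have hyF : y = F := by
        by_contra hne
        have hyne : y ≠ -e := by
          intro hc
          rw [hy] at hc
          omega
        have := (hstep y hne hyne).mpr (by rw [hyE]; exact hspec)
        exact hymem this
      exact ⟨k₀ - 1, by rw [← hy]; exact hyF⟩
    have he_eq : e = 2 := by
      by_contra hc
      have he3 : 3 ≤ e := by omega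
      have h2n : (2:ℤ) ∉ S' := by
        intro h
        have := hemin 2 (by norm_num) h
        omega
      obtain ⟨k₁, hk1⟩ := hchain 1 one_pos h1
      obtain ⟨k₂, hk2⟩ := hchain 2 two_pos h2n
      have hd : ((k₁:ℤ) - k₂) * e = 1 := by linear_combination hk1 - hk2
      have hdvd : e ∣ 1 := ⟨(k₁:ℤ) - k₂, by linarith [hd]⟩
      have := Int.le_of_dvd one_pos hdvd
      omega
    have hFodd : ¬ Even F := by
      intro hev
      obtain ⟨c, hcc⟩ := hev
      have h2 := hsymS c
      rw [show γS - 1 - c = c from by omega] at h2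
      exact iff_not_self h2
    have h2S : (2:ℤ) ∈ S' := he_eq ▸ heS
    have heven : ∀ c : ℤ, 0 ≤ c → c + c ∈ S' := by
      exact fun c hc => Int.le_induction (motive := fun c _ => c + c ∈ S') (m := 0)
        (by simpa using h0)
        (fun n hn ih => by
          have h3 := hadd _ ih _ h2S
          rwa [show n + n + 2 = (n+1) + (n+1) from by ring] at h3) c hc
    have hFcast : (((F + 1).toNat : ℤ)) = F + 1 := Int.toNat_of_nonneg (by omega)
    have hFo : Odd F := (Int.even_or_odd F).resolve_left hFodd
    obtain ⟨d, hd⟩ := hFo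
    refine ⟨(F + 1).toNat, ?_, ?_⟩
    · rw [← Int.even_coe_nat, hFcast]
      exact ⟨d + 1, by omega⟩
    · ext x
      simp only [Set.mem_setOf_eq]
      rw [hFcast]
      constructor
      · intro hx
        rcases Int.even_or_odd x with hev | hod
        · obtain ⟨c, rfl⟩ := hev
          have hc0 : 0 ≤ c := by have := hpos _ hx; omega
          refine ⟨c.toNat, 0, ?_⟩
          have hct : ((c.toNat : ℕ):ℤ) = c := Int.toNat_of_nonneg hc0
          rw [hct]
          push_cast
          ring
        · obtain ⟨c, hcx⟩ := hod
          have hxF : F + 2 ≤ x := by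
            by_contra hcl
            push_neg at hcl
            have hxne : x ≠ F + 1 := by
              intro hq
              exact hFodd ⟨c, by omega⟩
            have hmem : F - x ∈ S' := by
              rw [show F - x = (d - c) + (d - c) from by omega]
              exact heven _ (by omega)
            apply (hsymS x).mp hx
            rwa [show γS - 1 - x = F - x from by omega]
          refine ⟨(c - d - 1).toNat, 1, ?_⟩
          have hge : (0:ℤ) ≤ c - d - 1 := by omega
          have hct : (((c - d - 1).toNat : ℕ):ℤ) = c - d - 1 := Int.toNat_of_nonneg hge
          rw [hct, hcx, hd]
          push_cast
          ring
      · rintro ⟨a, b, rfl⟩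
        have hb : ∀ b : ℕ, (F + 1 + 1) * (b:ℤ) ∈ S' := by
          intro b
          induction b with
          | zero => simpa using h0
          | succ n ih =>
            push_cast
            rw [show (F + 1 + 1) * ((n:ℤ) + 1) = (F + 1 + 1) * (n:ℤ) + (F + 2) from by ring]
            exact hadd _ ih _ (hcS (F + 2) (by omega))
        apply hadd
        · rw [show (2:ℤ) * (a:ℤ) = (a:ℤ) + (a:ℤ) from by ring]
          exact heven _ (by positivity)
        · exact hb b

end AuxLemmas

/-- **Proposition.** Let `S` be a numerical symmetric semigroup (`|I| = 1`)
with maximal ideal `M_S = S \ {0}`. If `M_S − M_S` is symmetric, then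
`S = ⟨2, n+1⟩ = {2a + (n+1)b : a, b ∈ ℕ}` for some even `n ∈ ℕ`. -/
theorem stmt_9 {I : Type*} [Fintype I] [Nonempty I] (hcard : Fintype.card I = 1)
    (S : Set (I → ℤ)) (hS : IsSymmetricSg S)
    (hMM : IsSymmetricSg (sgDiff (S \ {0}) (S \ {0}))) :
    ∃ n : ℕ, Even n ∧
      S = {α | ∃ a b : ℕ, α = fun _ => 2 * (a : ℤ) + ((n : ℤ) + 1) * (b : ℤ)} := by
  have hI : Subsingleton I := Fintype.card_le_one_iff_subsingleton.mp (by omega)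
  obtain ⟨i₀⟩ := ‹Nonempty I›
  obtain ⟨γS, hcS, hsymS⟩ := symm_classical hI i₀ S hS
  obtain ⟨γT, hcT, hsymT⟩ := symm_classical hI i₀ _ hMM
  obtain ⟨h0S, haddS, hposS, -, -, -⟩ := hS.1
  set S' : Set ℤ := {x : ℤ | (fun _ : I => x) ∈ S} with hS'def
  set T' : Set ℤ := {x : ℤ | (fun _ : I => x) ∈ sgDiff (S \ {0}) (S \ {0})} with hT'def
  have memS' : ∀ x : ℤ, x ∈ S' ↔ (fun _ : I => x) ∈ S := by
    intro x; rw [hS'def]; exact Iff.rfl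
  have memT' : ∀ x : ℤ, x ∈ T' ↔ (fun _ : I => x) ∈ sgDiff (S \ {0}) (S \ {0}) := by
    intro x; rw [hT'def]; exact Iff.rfl
  have h0' : (0:ℤ) ∈ S' := (memS' 0).mpr h0S
  have hadd' : ∀ a ∈ S', ∀ b ∈ S', a + b ∈ S' := by
    intro a ha b hb
    rw [memS'] at ha hb ⊢
    exact haddS _ ha _ hb
  have hpos' : ∀ a ∈ S', 0 ≤ a := by
    intro a ha
    rw [memS'] at ha
    exact hposS _ ha i₀
  have hcS' : ∀ m : ℤ, γS ≤ m → m ∈ S' := fun m hm => (memS' m).mpr (hcS m hm)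
  have hsymS' : ∀ x : ℤ, x ∈ S' ↔ γS - 1 - x ∉ S' := by
    intro x
    rw [memS', memS']
    exact hsymS x
  have hsymT' : ∀ x : ℤ, x ∈ T' ↔ γT - 1 - x ∉ T' := by
    intro x
    rw [memT', memT']
    exact hsymT x
  have hmemT : ∀ x : ℤ, x ∈ T' ↔ ∀ m ∈ S', m ≠ 0 → x + m ∈ S' ∧ x + m ≠ 0 := by
    intro x
    rw [memT']
    constructor
    · intro h m hm hm0
      rw [memS'] at hm
      have hmM : (fun _ : I => m) ∈ S \ {0} := by
        refine ⟨hm, ?_⟩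
        simp only [Set.mem_singleton_iff]
        intro hc
        exact hm0 (congrFun hc i₀)
      have h2 := h _ hmM
      have heq : (fun _ : I => x) + (fun _ : I => m) = fun _ : I => x + m := rfl
      rw [heq] at h2
      refine ⟨(memS' _).mpr h2.1, ?_⟩
      intro hc
      apply h2.2
      simp only [Set.mem_singleton_iff]
      funext j
      exact hc
    · intro h β hβ
      obtain ⟨hβS, hβ0⟩ := hβ
      have hβc : β = fun _ : I => β i₀ := const_eq hI β i₀
      have hβi : β i₀ ∈ S' := by
        rw [memS', ← hβc]
        exact hβS
      have hβne : β i₀ ≠ 0 := by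
        intro hc
        apply hβ0
        simp only [Set.mem_singleton_iff]
        rw [hβc, hc]
        rfl
      obtain ⟨hm1, hm2⟩ := h _ hβi hβne
      have heq : (fun _ : I => x) + β = fun _ : I => x + β i₀ := by
        funext j
        have : β j = β i₀ := by rw [Subsingleton.elim j i₀]
        show x + β j = x + β i₀
        omega
      rw [heq]
      refine ⟨(memS' _).mp hm1, ?_⟩
      simp only [Set.mem_singleton_iff]
      intro hc
      exact hm2 (congrFun hc i₀)
  obtain ⟨n, hne, hset⟩ := zmain S' T' h0' hadd' hpos' γS γT hcS' hsymS' hsymT' hmemT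
  refine ⟨n, hne, ?_⟩
  ext α
  simp only [Set.mem_setOf_eq]
  constructor
  · intro hα
    have hαc : α = fun _ : I => α i₀ := const_eq hI α i₀
    have hmem : α i₀ ∈ S' := by
      rw [memS', ← hαc]
      exact hα
    rw [hset] at hmem
    obtain ⟨a, b, hab⟩ := hmem
    refine ⟨a, b, funext fun j => ?_⟩
    have : α j = α i₀ := by rw [Subsingleton.elim j i₀]
    rw [this]
    exact hab
  · rintro ⟨a, b, rfl⟩
    have hmem : (2 * (a:ℤ) + ((n:ℤ) + 1) * (b:ℤ)) ∈ S' := by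
      rw [hset]
      exact ⟨a, b, rfl⟩
    exact (memS' _).mp hmem
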